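/- Every nonempty subset A of ℝ that is dense-in-itself (every point of A is a limit point of A) contains a subset order-isomorphic to ℚ. -/

import Mathlib

open Set

section Aux

variable {A : Set ℝ}

/-- From dense-in-itself: any open interval containing a point of `A` contains a point `p` of `A`
with points of `A` on both sides (within the interval). -/
private lemma three_pts (hacc : ∀ x ∈ A, AccPt x (Filter.principal A)) :
    ∀ u v : ℝ, (∃ x ∈ A, x ∈ Ioo u v) →
      ∃ p, p ∈ A ∧ p ∈ Ioo u v ∧ (∃ y ∈ A, y ∈ Ioo u p) ∧ (∃ z ∈ A, z ∈ Ioo p v) := by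
  intro u v ⟨x, hxA, hx⟩
  obtain ⟨y, ⟨hyI, hyA⟩, hyx⟩ :=
    accPt_iff_nhds.1 (hacc x hxA) (Ioo u v) (Ioo_mem_nhds hx.1 hx.2)
  -- two distinct points a < b of A in Ioo u v
  obtain ⟨a, b, haA, hbA, haI, hbI, hab⟩ :
      ∃ a b : ℝ, a ∈ A ∧ b ∈ A ∧ a ∈ Ioo u v ∧ b ∈ Ioo u v ∧ a < b := by
    rcases lt_or_gt_of_ne hyx with h | h
    · exact ⟨y, x, hyA, hxA, hyI, hx, h⟩
    · exact ⟨x, y, hxA, hyA, hx, hyI, h⟩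
  obtain ⟨w, ⟨hwI, hwA⟩, hwa⟩ :=
    accPt_iff_nhds.1 (hacc a haA) (Ioo u b) (Ioo_mem_nhds haI.1 hab)
  rcases lt_or_gt_of_ne hwa with h | h
  · exact ⟨a, haA, haI, ⟨w, hwA, hwI.1, h⟩, ⟨b, hbA, hab, hbI.2⟩⟩
  · exact ⟨w, hwA, ⟨hwI.1, lt_trans hwI.2 hbI.2⟩, ⟨a, haA, haI.1, h⟩,
      ⟨b, hbA, hwI.2, hbI.2⟩⟩

variable (h3 : ∀ u v : ℝ, (∃ x ∈ A, x ∈ Ioo u v) →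
    ∃ p, p ∈ A ∧ p ∈ Ioo u v ∧ (∃ y ∈ A, y ∈ Ioo u p) ∧ (∃ z ∈ A, z ∈ Ioo p v))

private noncomputable def pick (u v : ℝ) (h : ∃ x ∈ A, x ∈ Ioo u v) : ℝ :=
  (h3 u v h).choose

private lemma pick_mem (u v : ℝ) (h : ∃ x ∈ A, x ∈ Ioo u v) :
    pick h3 u v h ∈ A := (h3 u v h).choose_spec.1

private lemma pick_Ioo (u v : ℝ) (h : ∃ x ∈ A, x ∈ Ioo u v) :
    pick h3 u v h ∈ Ioo u v := (h3 u v h).choose_spec.2.1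

private lemma pick_left (u v : ℝ) (h : ∃ x ∈ A, x ∈ Ioo u v) :
    ∃ y ∈ A, y ∈ Ioo u (pick h3 u v h) := (h3 u v h).choose_spec.2.2.1

private lemma pick_right (u v : ℝ) (h : ∃ x ∈ A, x ∈ Ioo u v) :
    ∃ z ∈ A, z ∈ Ioo (pick h3 u v h) v := (h3 u v h).choose_spec.2.2.2

/-- The binary tree of points of `A`. -/
private noncomputable def F : List Bool → (u v : ℝ) → (∃ x ∈ A, x ∈ Ioo u v) → ℝ
  | [], u, v, h => pick h3 u v h
  | false :: s, u, v, h => F s u (pick h3 u v h) (pick_left h3 u v h)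
  | true :: s, u, v, h => F s (pick h3 u v h) v (pick_right h3 u v h)

private lemma F_mem : ∀ (s : List Bool) (u v : ℝ) (h : ∃ x ∈ A, x ∈ Ioo u v),
    F h3 s u v h ∈ A ∧ F h3 s u v h ∈ Ioo u v := by
  intro s
  induction s with
  | nil => intro u v h; exact ⟨pick_mem h3 u v h, pick_Ioo h3 u v h⟩
  | cons b s ih =>
    intro u v h
    cases b with
    | false =>
      obtain ⟨hA, hI⟩ := ih u (pick h3 u v h) (pick_left h3 u v h)
      exact ⟨hA, by simpa [F] using ⟨hI.1, lt_trans hI.2 (pick_Ioo h3 u v h).2⟩⟩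
    | true =>
      obtain ⟨hA, hI⟩ := ih (pick h3 u v h) v (pick_right h3 u v h)
      exact ⟨hA, by simpa [F] using ⟨lt_trans (pick_Ioo h3 u v h).1 hI.1, hI.2⟩⟩

private lemma F_below : ∀ (s : List Bool) (u v : ℝ) (h : ∃ x ∈ A, x ∈ Ioo u v),
    ∃ r : List Bool, F h3 r u v h ∈ Ioo u (F h3 s u v h) := by
  intro s
  induction s with
  | nil =>
    intro u v h
    refine ⟨[false], ?_⟩
    have := pick_Ioo h3 u (pick h3 u v h) (pick_left h3 u v h)
    simpa [F] using this
  | cons b s ih =>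
    intro u v h
    cases b with
    | false =>
      obtain ⟨r, hr⟩ := ih u (pick h3 u v h) (pick_left h3 u v h)
      exact ⟨false :: r, by simpa [F] using hr⟩
    | true =>
      obtain ⟨r, hr⟩ := ih (pick h3 u v h) v (pick_right h3 u v h)
      refine ⟨true :: r, ?_⟩
      simp only [F]
      exact ⟨lt_trans (pick_Ioo h3 u v h).1 hr.1, hr.2⟩

private lemma F_above : ∀ (s : List Bool) (u v : ℝ) (h : ∃ x ∈ A, x ∈ Ioo u v),
    ∃ r : List Bool, F h3 r u v h ∈ Ioo (F h3 s u v h) v := by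
  intro s
  induction s with
  | nil =>
    intro u v h
    refine ⟨[true], ?_⟩
    have := pick_Ioo h3 (pick h3 u v h) v (pick_right h3 u v h)
    simpa [F] using this
  | cons b s ih =>
    intro u v h
    cases b with
    | false =>
      obtain ⟨r, hr⟩ := ih u (pick h3 u v h) (pick_left h3 u v h)
      refine ⟨false :: r, ?_⟩
      simp only [F]
      exact ⟨hr.1, lt_trans hr.2 (pick_Ioo h3 u v h).2⟩
    | true =>
      obtain ⟨r, hr⟩ := ih (pick h3 u v h) v (pick_right h3 u v h)
      exact ⟨true :: r, by simpa [F] using hr⟩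

private lemma F_dense : ∀ (s t : List Bool) (u v : ℝ) (h : ∃ x ∈ A, x ∈ Ioo u v),
    F h3 s u v h < F h3 t u v h →
    ∃ r : List Bool, F h3 r u v h ∈ Ioo (F h3 s u v h) (F h3 t u v h) := by
  intro s
  induction s with
  | nil =>
    intro t u v h hlt
    cases t with
    | nil => exact absurd hlt (lt_irrefl _)
    | cons b t =>
      cases b with
      | false =>
        have := (F_mem h3 t u (pick h3 u v h) (pick_left h3 u v h)).2.2
        simp only [F] at hlt
        exact absurd (lt_trans hlt this) (lt_irrefl _)
      | true =>
        obtain ⟨r, hr⟩ := F_below h3 t (pick h3 u v h) v (pick_right h3 u v h)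
        exact ⟨true :: r, by simpa [F] using hr⟩
  | cons b s ih =>
    intro t u v h hlt
    cases t with
    | nil =>
      cases b with
      | false =>
        obtain ⟨r, hr⟩ := F_above h3 s u (pick h3 u v h) (pick_left h3 u v h)
        exact ⟨false :: r, by simpa [F] using hr⟩
      | true =>
        have := (F_mem h3 s (pick h3 u v h) v (pick_right h3 u v h)).2.1
        simp only [F] at hlt
        exact absurd (lt_trans this hlt) (lt_irrefl _)
    | cons b' t =>
      cases b with
      | false =>
        cases b' with
        | false =>
          simp only [F] at hlt ⊢
          obtain ⟨r, hr⟩ := ih t u (pick h3 u v h) (pick_left h3 u v h) hlt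
          exact ⟨false :: r, by simpa [F] using hr⟩
        | true =>
          refine ⟨[], ?_⟩
          have h1 := (F_mem h3 s u (pick h3 u v h) (pick_left h3 u v h)).2.2
          have h2 := (F_mem h3 t (pick h3 u v h) v (pick_right h3 u v h)).2.1
          simp only [F]
          exact ⟨h1, h2⟩
      | true =>
        cases b' with
        | false =>
          have h1 := (F_mem h3 s (pick h3 u v h) v (pick_right h3 u v h)).2.1
          have h2 := (F_mem h3 t u (pick h3 u v h) (pick_left h3 u v h)).2.2
          simp only [F] at hlt
          exact absurd (lt_trans (lt_trans h2 h1) hlt) (lt_irrefl _)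
        | true =>
          simp only [F] at hlt ⊢
          obtain ⟨r, hr⟩ := ih t (pick h3 u v h) v (pick_right h3 u v h) hlt
          exact ⟨true :: r, by simpa [F] using hr⟩

end Aux

/-- Every nonempty dense-in-itself subset `A` of `ℝ` (every point of `A` is an
accumulation point of `A`) contains a subset order-isomorphic to `ℚ`. -/
theorem dense_in_itself_contains_rat_order_copy (A : Set ℝ)
    (hne : A.Nonempty) (hacc : ∀ x ∈ A, AccPt x (Filter.principal A)) :
    ∃ f : ℚ → ℝ, StrictMono f ∧ ∀ q, f q ∈ A := by
  obtain ⟨a, ha⟩ := hne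
  have h3 := three_pts hacc
  have h0 : ∃ x ∈ A, x ∈ Ioo (a - 1) (a + 1) :=
    ⟨a, ha, by constructor <;> linarith⟩
  set S : Set ℝ := Set.range (fun s : List Bool => F h3 s (a - 1) (a + 1) h0) with hS
  have hSA : S ⊆ A := by
    rintro x ⟨s, rfl⟩
    exact (F_mem h3 s (a - 1) (a + 1) h0).1
  haveI : DenselyOrdered ↥S := by
    constructor
    rintro ⟨x, s, rfl⟩ ⟨y, t, rfl⟩ hlt
    obtain ⟨r, hr⟩ := F_dense h3 s t (a - 1) (a + 1) h0 (by exact_mod_cast hlt)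
    exact ⟨⟨F h3 r (a - 1) (a + 1) h0, ⟨r, rfl⟩⟩, by exact_mod_cast hr.1, by exact_mod_cast hr.2⟩
  haveI : Nontrivial ↥S := by
    have h1 : F h3 [] (a - 1) (a + 1) h0 < F h3 [true] (a - 1) (a + 1) h0 := by
      have := pick_Ioo h3 (pick h3 (a - 1) (a + 1) h0) (a + 1) (pick_right h3 (a - 1) (a + 1) h0)
      simpa [F] using this.1
    exact ⟨⟨_, ⟨[], rfl⟩⟩, ⟨_, ⟨[true], rfl⟩⟩, by
      intro hcon
      replace hcon := congrArg Subtype.val hcon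
      exact absurd hcon (ne_of_lt h1)⟩
  obtain ⟨e⟩ := Order.embedding_from_countable_to_dense (α := ℚ) (β := ↥S)
  refine ⟨fun q => (e q : ℝ), ?_, fun q => hSA (e q).2⟩
  intro p q hpq
  exact_mod_cast e.strictMono hpq
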